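/- Let M be a compact connected oriented 3-manifold whose boundary is a single torus T (∂M = T), and let M̄ = M ∪_T Z be the closed manifold obtained by gluing a solid torus Z along T, with b_1(M̄) = b_1(M) - 1. Then (ι_M)_*(Det_ω(f_M)) = 0 in S(H^1(M̄)*), where f_M(x,y,z) = ⟨x ∪ y ∪ z, [M]⟩ for x ∈ H^1(M,∂M), y,z ∈ H^1(M), and (ι_M)_* : S(H^1(M)*) → S(H^1(M̄)*) is induced by inclusion. -/

import Mathlib

open MvPolynomial

/-- (Theorem 3.1, Item 2.)  Let `M` be a compact connected
oriented 3-manifold with `∂M = T` a single torus, and `M̄ = M ∪_T Z` closed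
with `b_1(M̄) = b_1(M) - 1` (and `b_1(M̄) ≥ 3`, so `n = b_1(M) ≥ 4`).  Then
`(ι_M)_*(Det_ω(f_M)) = 0` in `S(H^1(M̄)*)`.

Encoding (cohomology of manifolds is not in Mathlib): `K = H^1(M)` and
`L = H^1(M,∂M)` are free ℤ-modules of ranks `n = N+2` and `n-1 = N+1`;
`f = f_M` with `f(x,y,z) = ⟨x ∪ y ∪ z, [M]⟩`, skew-symmetric in the last two
variables; `ι : L → K` is the map `H^1(M,∂M) → H^1(M)`, which here (case
`b_1(M̄) = b_1(M) - 1`) is injective, and the bases are chosen as in the paper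
with `a_i = ι(b_i)` for `i ≤ n-1` (`hcompat`).  The hypothesis `hanti` records
that `f(b_i, y, ι(b_k)) = ⟨b_i ∪ y ∪ b_k-lift, [M]⟩` is antisymmetric in
`(i,k)`, since `b_i ∪ b_k` is antisymmetric — the key fact of the proof.
`S(H^1(M)*)` is realized as `MvPolynomial (Fin (N+2)) ℤ` via the basis `a`
(variables `a_i* ↦ X i`), `d` is the determinant `d(f_M,a,b)` characterized by
`det θ(i) = (-1)^i a_i* d` (0-based, whence `(-1)^(i+1)`), and
`(ι_M)_* : S(H^1(M)*) → S(H^1(M̄)*)` is, in the bases chosen in the paper, the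
substitution `X i ↦ X i` (`i < n-1`), `X (n-1) ↦ 0`.  Since
`Det_ω(f_M) = ± d(f_M,a,b)`, the claim `(ι_M)_*(Det_ω(f_M)) = 0` is exactly
`(ι_M)_*(d) = 0`. -/

lemma det_eq_zero_of_vecMul_eq_zero' {n : Type*} [DecidableEq n] [Fintype n]
    {R : Type*} [CommRing R] [IsDomain R] (A : Matrix n n R) (v : n → R)
    (hv : v ≠ 0) (h : Matrix.vecMul v A = 0) : A.det = 0 := by
  by_contra hdet
  have h1 : Matrix.vecMul v (A * A.adjugate) = 0 := by
    rw [← Matrix.vecMul_vecMul, h, Matrix.zero_vecMul]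
  rw [Matrix.mul_adjugate] at h1
  obtain ⟨i, hi⟩ := Function.ne_iff.mp hv
  have h2 := congrFun h1 i
  simp only [Matrix.vecMul, dotProduct, Matrix.smul_apply, Matrix.one_apply,
    smul_eq_mul, mul_ite, mul_one, mul_zero, Finset.sum_ite_eq',
    Finset.mem_univ, if_true, Pi.zero_apply, mul_eq_zero] at h2
  tauto

theorem pushforward_det_vanishes_when_b1_drops
    {K L : Type*} [AddCommGroup K] [Module ℤ K] [AddCommGroup L] [Module ℤ L]
    {N : ℕ} (hN : 2 ≤ N)
    (a : Module.Basis (Fin (N + 2)) ℤ K) (b : Module.Basis (Fin (N + 1)) ℤ L)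
    (f : L →ₗ[ℤ] K →ₗ[ℤ] K →ₗ[ℤ] ℤ)
    (hskew : ∀ (x : L) (y z : K), f x y z = - f x z y)
    (ι : L →ₗ[ℤ] K)
    (hcompat : ∀ i : Fin (N + 1), ι (b i) = a (Fin.castSucc i))
    (hanti : ∀ (i k : Fin (N + 1)) (y : K),
      f (b i) y (ι (b k)) = - f (b k) y (ι (b i)))
    (d : MvPolynomial (Fin (N + 2)) ℤ)
    (hd : ∀ i : Fin (N + 2),
      ((Matrix.of fun p q =>
          ∑ k : Fin (N + 2),
            MvPolynomial.C (f (b p) (a q) (a k)) * MvPolynomial.X k).submatrix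
        id i.succAbove).det
        = (-1) ^ ((i : ℕ) + 1) * MvPolynomial.X i * d) :
    MvPolynomial.aeval
        (Fin.snoc (fun i : Fin (N + 1) =>
            (MvPolynomial.X i : MvPolynomial (Fin (N + 1)) ℤ)) 0) d
      = 0 := by

  classical
  set R := MvPolynomial (Fin (N + 1)) ℤ
  set φ : MvPolynomial (Fin (N + 2)) ℤ →ₐ[ℤ] R :=
    MvPolynomial.aeval (Fin.snoc (fun i : Fin (N + 1) =>
      (MvPolynomial.X i : R)) 0) with hφ
  -- the mapped submatrix (omitting column 0)
  set B : Matrix (Fin (N + 1)) (Fin (N + 1)) R :=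
    Matrix.of (fun p j => ∑ k : Fin (N + 1),
      MvPolynomial.C (f (b p) (a ((0 : Fin (N + 2)).succAbove j)) (ι (b k)))
        * MvPolynomial.X k) with hB
  have hmapB : ((Matrix.of fun p q =>
      ∑ k : Fin (N + 2),
        MvPolynomial.C (f (b p) (a q) (a k)) * MvPolynomial.X k).submatrix
        id (0 : Fin (N + 2)).succAbove).map φ = B := by
    ext p j
    simp only [Matrix.map_apply, Matrix.submatrix_apply, Matrix.of_apply, id,
      map_sum, map_mul, hB]
    rw [Fin.sum_univ_castSucc]
    simp [hφ, Fin.snoc_castSucc, Fin.snoc_last, hcompat, MvPolynomial.aeval_C,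
      MvPolynomial.algebraMap_eq]
  -- the key vanishing: (X_0,...,X_N) is in the left kernel of B
  have hker : Matrix.vecMul (fun p : Fin (N + 1) => (MvPolynomial.X p : R)) B = 0 := by
    funext j
    simp only [Matrix.vecMul, dotProduct, hB, Matrix.of_apply, Pi.zero_apply,
      Finset.mul_sum]
    set S := ∑ p : Fin (N + 1), ∑ k : Fin (N + 1),
      (MvPolynomial.X p : R) *
        (MvPolynomial.C (f (b p) (a ((0 : Fin (N + 2)).succAbove j)) (ι (b k)))
          * MvPolynomial.X k) with hS
    have hSS : S = -S := by
      nth_rewrite 1 [hS, Finset.sum_comm]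
      rw [hS, ← Finset.sum_neg_distrib]
      refine Finset.sum_congr rfl fun k _ => ?_
      rw [← Finset.sum_neg_distrib]
      refine Finset.sum_congr rfl fun p _ => ?_
      rw [hanti p k (a ((0 : Fin (N + 2)).succAbove j)), map_neg]
      ring
    have h2 : (2 : R) * S = 0 := by
      rw [two_mul]; nth_rewrite 1 [hSS]; ring
    have := (mul_eq_zero.mp h2).resolve_left (by norm_num)
    exact this
  have hvne : (fun p : Fin (N + 1) => (MvPolynomial.X p : R)) ≠ 0 := by
    intro h
    exact MvPolynomial.X_ne_zero (0 : Fin (N + 1)) (congrFun h 0)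
  have hdetB : B.det = 0 :=
    det_eq_zero_of_vecMul_eq_zero' B _ hvne hker
  have hmap := congrArg φ (hd 0)
  rw [AlgHom.map_det, AlgHom.mapMatrix_apply, hmapB, hdetB] at hmap
  simp only [map_mul, map_pow, map_neg, map_one] at hmap
  have hX0 : φ (MvPolynomial.X (0 : Fin (N + 2))) = MvPolynomial.X (0 : Fin (N + 1)) := by
    have : (0 : Fin (N + 2)) = Fin.castSucc (0 : Fin (N + 1)) := rfl
    rw [hφ, this, MvPolynomial.aeval_X, Fin.snoc_castSucc]
  rw [hX0] at hmap
  have : MvPolynomial.X (0 : Fin (N + 1)) * φ d = 0 := by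
    have h := hmap.symm
    simp only [Fin.val_zero, zero_add, pow_one, one_mul, neg_one_mul, neg_mul, neg_eq_zero] at h
    exact h
  rcases mul_eq_zero.mp this with h | h
  · exact absurd h (MvPolynomial.X_ne_zero _)
  · exact h
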